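/- arXiv:math/0412028 — 2 statements merged into one kernel-verified Lean document; each statement's English description precedes it below -/
import Mathlib

section
/- Let d be a positive integer and v ∈ {0,1}^d with v ≠ 0, with weight w = s(v) and signature sig_1(v) > … > sig_w(v). Suppose x, y ∈ X(v) are distinct vertices such that the segment [x,y] is an edge of P(v), with x ∈ X_q(v) and y ∈ X_p(v). Then: (1) if p = q, then x and y differ in exactly one coordinate (the edge is a cube edge of the block); (2) if p < q, then y satisfies y_i = x_i for all 0 ≤ i < sig_q(v), y_{sig_r(v)} = 1 for all r with p < r < q, and either y_{sig_q(v)} = 0, or else y_{sig_q(v)} = 1 and max({i ∈ {0,…,sig_q(v)−1} : x_i ≠ v_i} ∪ {−1}) ∉ Sig(v). -/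
open Finset

/-- The set of 0/1-vectors in ℝ^d. -/
def ZeroOne (d : ℕ) : Set (Fin d → ℝ) := {x | ∀ i, x i = 0 ∨ x i = 1}

/-- `x` is reverse-lexicographically smaller than `y`:
there is an index `m` with `x m < y m` and `x i = y i` for all `i > m`
(equivalently, `x m < y m` for `m` the largest index where `x` and `y` differ). -/
def RlexLt {d : ℕ} (x y : Fin d → ℝ) : Prop :=
  ∃ m : Fin d, x m < y m ∧ ∀ i : Fin d, m < i → x i = y i

/-- `X(v)`: the 0/1-points revlex-smaller than `v`. -/
def Xset {d : ℕ} (v : Fin d → ℝ) : Set (Fin d → ℝ) :=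
  {x | x ∈ ZeroOne d ∧ RlexLt x v}

/-- The revlex-initial 0/1-polytope `P(v) = conv X(v)`. -/
noncomputable def Pset {d : ℕ} (v : Fin d → ℝ) : Set (Fin d → ℝ) :=
  convexHull ℝ (Xset v)

/-- `Sig(v)`: the support of `v` (the indices of its one-entries). -/
noncomputable def Sig {d : ℕ} (v : Fin d → ℝ) : Finset (Fin d) :=
  @Finset.filter (Fin d) (fun i => v i = 1) (Classical.decPred _) Finset.univ

/-- `Sig_{>i}(v)`: the elements of `Sig(v)` above `i`. -/
noncomputable def SigGt {d : ℕ} (v : Fin d → ℝ) (i : Fin d) : Finset (Fin d) :=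
  (Sig v).filter (fun j => i < j)

/-- The dimension of the affine hull of a set in ℝ^d. -/
noncomputable def adim {d : ℕ} (s : Set (Fin d → ℝ)) : ℕ :=
  Module.finrank ℝ (affineSpan ℝ s).direction

/-- A face of a polytope: a convex extreme subset. -/
def IsFaceOf {d : ℕ} (P F : Set (Fin d → ℝ)) : Prop :=
  Convex ℝ F ∧ IsExtreme ℝ P F

/-- The number of indices satisfying a predicate. -/
noncomputable def cnt {d : ℕ} (p : Fin d → Prop) : ℕ :=
  (@Finset.filter (Fin d) p (Classical.decPred _) Finset.univ).card

/-- The block `X_q(v)`: 0/1-points with `x_{sig_q(v)} = 0` agreeing with `v`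
above `sig_q(v)`. -/
def Block {d : ℕ} (v : Fin d → ℝ) (sig : ℕ → Fin d) (q : ℕ) : Set (Fin d → ℝ) :=
  {x | x ∈ ZeroOne d ∧ x (sig q) = 0 ∧ ∀ i : Fin d, sig q < i → x i = v i}

/-- `max({i < b : x_i ≠ v_i} ∪ {−1})` as an integer. -/
noncomputable def maxDiff {d : ℕ} (v x : Fin d → ℝ) (b : ℕ) : ℤ :=
  (insert (-1 : ℤ)
    ((@Finset.filter (Fin d) (fun i => (i : ℕ) < b ∧ x i ≠ v i)
        (Classical.decPred _) Finset.univ).image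
      (fun i : Fin d => ((i : ℕ) : ℤ)))).max' (Finset.insert_nonempty _ _)

lemma mem_filter_cl {α : Type*} {p : α → Prop} {s : Finset α} {a : α} :
    a ∈ @Finset.filter α p (Classical.decPred _) s ↔ a ∈ s ∧ p a :=
  @Finset.mem_filter _ _ (Classical.decPred _) _ _

lemma zo_update {d : ℕ} {x : Fin d → ℝ} (hx : x ∈ ZeroOne d) (i : Fin d) {c : ℝ}
    (hc : c = 0 ∨ c = 1) : Function.update x i c ∈ ZeroOne d := by
  intro k
  rcases eq_or_ne k i with rfl | h
  · simpa using hc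
  · rw [Function.update_of_ne h]; exact hx k

lemma swap_sum {d : ℕ} (x y : Fin d → ℝ) (j : Fin d) :
    Function.update x j (y j) + Function.update y j (x j) = x + y := by
  funext k
  rcases eq_or_ne k j with rfl | h
  · simp [add_comm]
  · simp [Function.update_of_ne h]

lemma mem_Xset' {d : ℕ} {v a : Fin d → ℝ} (ha : a ∈ ZeroOne d) (m : Fin d)
    (h1 : a m = 0) (h2 : v m = 1) (h3 : ∀ i, m < i → a i = v i) : a ∈ Xset v :=
  ⟨ha, m, by rw [h1, h2]; norm_num, h3⟩

lemma seg01 {d : ℕ} {x y a : Fin d → ℝ} (hx : x ∈ ZeroOne d) (hy : y ∈ ZeroOne d)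
    (ha : a ∈ ZeroOne d) (h : a ∈ segment ℝ x y) : a = x ∨ a = y := by
  obtain ⟨u, t, hu, ht, hut, hform⟩ := h
  by_cases hxy : x = y
  · subst hxy
    left
    rw [← hform, ← add_smul, hut, one_smul]
  · obtain ⟨i, hi⟩ := Function.ne_iff.mp hxy
    have hai : u * x i + t * y i = a i := congrFun hform i
    have ht01 : t = 0 ∨ t = 1 := by
      rcases hx i with h1 | h1 <;> rcases hy i with h2 | h2
      · exact absurd (h1.trans h2.symm) hi
      · rcases ha i with h3 | h3 <;> rw [h1, h2, h3] at hai
        · left; linarith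
        · right; linarith
      · rcases ha i with h3 | h3 <;> rw [h1, h2, h3] at hai
        · right; linarith
        · left; linarith
      · exact absurd (h1.trans h2.symm) hi
    rcases ht01 with h | h
    · left
      have hu1 : u = 1 := by linarith
      rw [← hform, h, hu1, one_smul, zero_smul, add_zero]
    · right
      have hu0 : u = 0 := by linarith
      rw [← hform, h, hu0, one_smul, zero_smul, zero_add]

lemma key_lemma {d : ℕ} {v x y a b : Fin d → ℝ}
    (hface : IsFaceOf (Pset v) (segment ℝ x y))
    (hx01 : x ∈ ZeroOne d) (hy01 : y ∈ ZeroOne d) (hxy : x ≠ y)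
    (ha : a ∈ Xset v) (hb : b ∈ Xset v)
    (hsum : a + b = x + y) (hax : a ≠ x) (hay : a ≠ y) : False := by
  have hab : a ≠ b := by
    rintro rfl
    obtain ⟨i, hi⟩ := Function.ne_iff.mp hxy
    have h2 : a i + a i = x i + y i := congrFun hsum i
    rcases hx01 i with h4 | h4 <;> rcases hy01 i with h5 | h5
    · exact hi (h4.trans h5.symm)
    · rcases ha.1 i with h3 | h3 <;> rw [h3, h4, h5] at h2 <;> linarith
    · rcases ha.1 i with h3 | h3 <;> rw [h3, h4, h5] at h2 <;> linarith
    · exact hi (h4.trans h5.symm)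
  set z : Fin d → ℝ := (1/2 : ℝ) • x + (1/2 : ℝ) • y with hz
  have hzseg : z ∈ segment ℝ x y := ⟨1/2, 1/2, by norm_num, by norm_num, by norm_num, rfl⟩
  have hzopen : z ∈ openSegment ℝ a b := by
    refine ⟨1/2, 1/2, by norm_num, by norm_num, by norm_num, ?_⟩
    rw [hz, ← smul_add, ← smul_add, hsum]
  have haP : a ∈ Pset v := subset_convexHull ℝ (Xset v) ha
  have hbP : b ∈ Pset v := subset_convexHull ℝ (Xset v) hb
  have haseg : a ∈ segment ℝ x y := hface.2.2 haP hbP hzseg hzopen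
  rcases seg01 hx01 hy01 ha.1 haseg with h | h
  · exact hax h
  · exact hay h

/-- every edge `[x,y]` of `P(v)` with `x ∈ X_q(v)`, `y ∈ X_p(v)` is
either a cube edge of a block (case `p = q`) or, for `p < q`, is of the form
described in Theorem 9/10. -/
theorem stmt11 (d : ℕ) (hd : 0 < d) (v : Fin d → ℝ) (hv : v ∈ ZeroOne d) (hv0 : v ≠ 0)
    (w : ℕ) (hw : w = (Sig v).card)
    (sig : ℕ → Fin d)
    (hanti : StrictAntiOn sig (Set.Icc 1 w))
    (himg : ∀ j : Fin d, j ∈ Sig v ↔ ∃ q, 1 ≤ q ∧ q ≤ w ∧ sig q = j)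
    (p q : ℕ) (hp1 : 1 ≤ p) (hpw : p ≤ w) (hq1 : 1 ≤ q) (hqw : q ≤ w)
    (x y : Fin d → ℝ) (hxy : x ≠ y)
    (hx : x ∈ Block v sig q) (hy : y ∈ Block v sig p)
    (hface : IsFaceOf (Pset v) (segment ℝ x y))
    (hdim : adim (segment ℝ x y) = 1) :
    (p = q → cnt (fun i : Fin d => x i ≠ y i) = 1) ∧
    (p < q →
      (∀ i : Fin d, (i : ℕ) < (sig q : ℕ) → y i = x i) ∧
      (∀ r : ℕ, p < r → r < q → y (sig r) = 1) ∧
      (y (sig q) = 0 ∨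
        (y (sig q) = 1 ∧
          ¬ ∃ i ∈ Sig v, ((i : ℕ) : ℤ) = maxDiff v x (sig q : ℕ)))) := by
  have hx01 : x ∈ ZeroOne d := hx.1
  have hy01 : y ∈ ZeroOne d := hy.1
  have hsig1 : ∀ r : ℕ, 1 ≤ r → r ≤ w → v (sig r) = 1 := by
    intro r h1 h2
    have : sig r ∈ Sig v := (himg (sig r)).mpr ⟨r, h1, h2, rfl⟩
    exact (Finset.mem_filter.mp this).2
  have hvq : v (sig q) = 1 := hsig1 q hq1 hqw
  have hvp : v (sig p) = 1 := hsig1 p hp1 hpw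
  constructor
  · -- p = q
    intro hpq
    subst hpq
    have hlow : ∀ k : Fin d, x k ≠ y k → k < sig p := by
      intro k hk
      rcases lt_trichotomy k (sig p) with h | h | h
      · exact h
      · subst h
        rw [hx.2.1, hy.2.1] at hk
        exact absurd rfl hk
      · rw [hx.2.2 k h, hy.2.2 k h] at hk
        exact absurd rfl hk
    obtain ⟨i0, hi0⟩ := Function.ne_iff.mp hxy
    have huniq : ∀ j1 j2 : Fin d, x j1 ≠ y j1 → x j2 ≠ y j2 → j1 = j2 := by
      intro j1 j2 h1 h2
      by_contra hne
      have hj1 : j1 < sig p := hlow j1 h1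
      have hj2 : j2 < sig p := hlow j2 h2
      refine key_lemma hface hx01 hy01 hxy
        (a := Function.update x j1 (y j1)) (b := Function.update y j1 (x j1))
        ?_ ?_ (swap_sum x y j1) ?_ ?_
      · refine mem_Xset' (zo_update hx01 j1 (hy01 j1)) (sig p) ?_ hvp ?_
        · rw [Function.update_of_ne hj1.ne', hx.2.1]
        · intro k hk
          rw [Function.update_of_ne (hj1.trans hk).ne', hx.2.2 k hk]
      · refine mem_Xset' (zo_update hy01 j1 (hx01 j1)) (sig p) ?_ hvp ?_
        · rw [Function.update_of_ne hj1.ne', hy.2.1]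
        · intro k hk
          rw [Function.update_of_ne (hj1.trans hk).ne', hy.2.2 k hk]
      · intro h
        have h' := congrFun h j1
        rw [Function.update_self] at h'
        exact h1 h'.symm
      · intro h
        have h' := congrFun h j2
        rw [Function.update_of_ne (Ne.symm hne)] at h'
        exact h2 h'
    unfold cnt
    rw [Finset.card_eq_one]
    refine ⟨i0, Finset.eq_singleton_iff_unique_mem.mpr
      ⟨mem_filter_cl.mpr ⟨Finset.mem_univ _, hi0⟩, fun j hj =>
        huniq j i0 (mem_filter_cl.mp hj).2 hi0⟩⟩
  · -- p < q
    intro hplt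
    have hqp : sig q < sig p :=
      hanti (Set.mem_Icc.mpr ⟨hp1, hpw⟩) (Set.mem_Icc.mpr ⟨hq1, hqw⟩) hplt
    have hxp : x (sig p) = 1 := by rw [hx.2.2 (sig p) hqp, hvp]
    have hyp : y (sig p) = 0 := hy.2.1
    refine ⟨?_, ?_, ?_⟩
    · -- below sig q they agree
      intro i hi
      have hi' : i < sig q := hi
      by_contra hne
      have hne' : x i ≠ y i := fun h => hne h.symm
      refine key_lemma hface hx01 hy01 hxy
        (a := Function.update x i (y i)) (b := Function.update y i (x i))
        ?_ ?_ (swap_sum x y i) ?_ ?_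
      · refine mem_Xset' (zo_update hx01 i (hy01 i)) (sig q) ?_ hvq ?_
        · rw [Function.update_of_ne hi'.ne', hx.2.1]
        · intro k hk
          rw [Function.update_of_ne (hi'.trans hk).ne', hx.2.2 k hk]
      · refine mem_Xset' (zo_update hy01 i (hx01 i)) (sig p) ?_ hvp ?_
        · rw [Function.update_of_ne (hi'.trans hqp).ne', hyp]
        · intro k hk
          rw [Function.update_of_ne ((hi'.trans hqp).trans hk).ne', hy.2.2 k hk]
      · intro h
        have h' := congrFun h i
        rw [Function.update_self] at h'
        exact hne h'
      · intro h
        have h' := congrFun h (sig p)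
        rw [Function.update_of_ne (hi'.trans hqp).ne', hxp, hyp] at h'
        norm_num at h'
    · -- middle ones are 1
      intro r hpr hrq
      have hr1 : 1 ≤ r := hp1.trans hpr.le
      have hrw : r ≤ w := hrq.le.trans hqw
      have hvr : v (sig r) = 1 := hsig1 r hr1 hrw
      have hsr1 : sig q < sig r :=
        hanti (Set.mem_Icc.mpr ⟨hr1, hrw⟩) (Set.mem_Icc.mpr ⟨hq1, hqw⟩) hrq
      have hsr2 : sig r < sig p :=
        hanti (Set.mem_Icc.mpr ⟨hp1, hpw⟩) (Set.mem_Icc.mpr ⟨hr1, hrw⟩) hpr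
      have hxr : x (sig r) = 1 := by rw [hx.2.2 (sig r) hsr1, hvr]
      by_contra hyr
      have hyr0 : y (sig r) = 0 := (hy01 (sig r)).resolve_right hyr
      refine key_lemma hface hx01 hy01 hxy
        (a := Function.update x (sig r) (y (sig r)))
        (b := Function.update y (sig r) (x (sig r)))
        ?_ ?_ (swap_sum x y (sig r)) ?_ ?_
      · refine mem_Xset' (zo_update hx01 _ (hy01 _)) (sig r) ?_ hvr ?_
        · rw [Function.update_self, hyr0]
        · intro k hk
          rw [Function.update_of_ne hk.ne', hx.2.2 k (hsr1.trans hk)]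
      · refine mem_Xset' (zo_update hy01 _ (hx01 _)) (sig p) ?_ hvp ?_
        · rw [Function.update_of_ne hsr2.ne', hyp]
        · intro k hk
          rw [Function.update_of_ne (hsr2.trans hk).ne', hy.2.2 k hk]
      · intro h
        have h' := congrFun h (sig r)
        rw [Function.update_self, hyr0, hxr] at h'
        norm_num at h'
      · intro h
        have h' := congrFun h (sig p)
        rw [Function.update_of_ne hsr2.ne', hxp, hyp] at h'
        norm_num at h'
    · -- the maxDiff condition
      rcases hy01 (sig q) with h0 | h1
      · exact Or.inl h0
      right
      refine ⟨h1, ?_⟩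
      rintro ⟨i, hiSig, hival⟩
      have hvi : v i = 1 := (Finset.mem_filter.mp hiSig).2
      set F := @Finset.filter (Fin d) (fun i => (i : ℕ) < ((sig q : Fin d) : ℕ) ∧ x i ≠ v i)
        (Classical.decPred _) Finset.univ with hF
      set T := insert (-1 : ℤ) (F.image (fun i : Fin d => ((i : ℕ) : ℤ))) with hT
      have hmd : maxDiff v x (sig q : ℕ) = T.max' (Finset.insert_nonempty _ _) := rfl
      have hmem : T.max' (Finset.insert_nonempty _ _) ∈ T := Finset.max'_mem _ _
      rw [← hmd, ← hival] at hmem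
      rcases Finset.mem_insert.mp hmem with h | h
      · omega
      obtain ⟨m, hmF, hm⟩ := Finset.mem_image.mp h
      have hmi : m = i := Fin.ext (by exact_mod_cast hm)
      subst hmi
      have hiprop := (mem_filter_cl.mp hmF).2
      have hilt : (m : ℕ) < ((sig q : Fin d) : ℕ) := hiprop.1
      have hilt' : m < sig q := hilt
      have hxi : x m = 0 := by
        rcases hx01 m with h' | h'
        · exact h'
        · exact absurd (h'.trans hvi.symm) hiprop.2
      have hmax : ∀ k : Fin d, (k : ℕ) < ((sig q : Fin d) : ℕ) → x k ≠ v k → (k : ℕ) ≤ (m : ℕ) := by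
        intro k hk1 hk2
        have hkT : ((k : ℕ) : ℤ) ∈ T :=
          Finset.mem_insert_of_mem (Finset.mem_image_of_mem _
            (mem_filter_cl.mpr ⟨Finset.mem_univ _, hk1, hk2⟩))
        have := Finset.le_max' T _ hkT
        rw [← hmd, ← hival] at this
        exact_mod_cast this
      refine key_lemma hface hx01 hy01 hxy
        (a := Function.update x (sig q) (y (sig q)))
        (b := Function.update y (sig q) (x (sig q)))
        ?_ ?_ (swap_sum x y (sig q)) ?_ ?_
      · refine mem_Xset' (zo_update hx01 _ (hy01 _)) m ?_ hvi ?_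
        · rw [Function.update_of_ne hilt'.ne, hxi]
        · intro k hk
          rcases lt_trichotomy k (sig q) with h' | h' | h'
          · rw [Function.update_of_ne h'.ne]
            by_contra hne
            have := hmax k h' hne
            omega
          · subst h'
            rw [Function.update_self, h1, hvq]
          · rw [Function.update_of_ne h'.ne', hx.2.2 k h']
      · refine mem_Xset' (zo_update hy01 _ (hx01 _)) (sig p) ?_ hvp ?_
        · rw [Function.update_of_ne hqp.ne', hyp]
        · intro k hk
          rw [Function.update_of_ne (hqp.trans hk).ne', hy.2.2 k hk]
      · intro h
        have h' := congrFun h (sig q)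
        rw [Function.update_self, h1, hx.2.1] at h'
        norm_num at h'
      · intro h
        have h' := congrFun h (sig p)
        rw [Function.update_of_ne hqp.ne', hxp, hyp] at h'
        norm_num at h'
end

section
/- For every positive integer d and every v ∈ {0,1}^d with v ≠ 0, the graph of the revlex-initial 0/1-polytope P(v) has edge expansion at least one: for every subset S of the vertex set X(v) with 0 < |S| and 2·|S| ≤ |X(v)|, the number of edges of P(v) having exactly one endpoint in S is at least |S|. -/
open Finset

-- ===== combinatorial core =====


/-- boundary edges: pairs (m, j) with m, m+2^j < N, bit j of m zero, exactly one endpoint in S -/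
def bdry (N : ℕ) (S : Finset ℕ) : Finset (ℕ × ℕ) :=
  (range N ×ˢ range N).filter fun p =>
    p.1 + 2^p.2 < N ∧ p.1 / 2^p.2 % 2 = 0 ∧ ((p.1 ∈ S) ↔ (p.1 + 2^p.2 ∉ S))

lemma mem_bdry {N : ℕ} {S : Finset ℕ} {p : ℕ × ℕ} :
    p ∈ bdry N S ↔ p.1 < N ∧ p.2 < N ∧ p.1 + 2^p.2 < N ∧ p.1 / 2^p.2 % 2 = 0 ∧
      ((p.1 ∈ S) ↔ (p.1 + 2^p.2 ∉ S)) := by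
  simp only [bdry, mem_filter, mem_product, mem_range]
  tauto

lemma mem_bdry' {N m j : ℕ} {S : Finset ℕ} :
    (m, j) ∈ bdry N S ↔ m < N ∧ j < N ∧ m + 2^j < N ∧ m / 2^j % 2 = 0 ∧
      ((m ∈ S) ↔ (m + 2^j ∉ S)) := mem_bdry

lemma bdry_compl (N : ℕ) (S : Finset ℕ) : bdry N S = bdry N ((range N) \ S) := by
  apply Finset.ext
  intro p
  simp only [mem_bdry, Finset.mem_sdiff, mem_range]
  constructor
  · rintro ⟨h1, h2, h3, h4, h5⟩
    exact ⟨h1, h2, h3, h4, by tauto⟩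
  · rintro ⟨h1, h2, h3, h4, h5⟩
    exact ⟨h1, h2, h3, h4, by tauto⟩

theorem coreMin : ∀ N : ℕ, ∀ S : Finset ℕ, S ⊆ range N →
    min S.card (N - S.card) ≤ (bdry N S).card := by
  intro N
  induction N using Nat.strong_induction_on with
  | _ N IH =>
  intro S hSN
  -- WLOG 2 * S.card ≤ N
  by_cases hhalf : 2 * S.card ≤ N
  case neg =>
    -- pass to complement
    have hcc : ((range N) \ S).card = N - S.card := by
      rw [Finset.card_sdiff_of_subset hSN, Finset.card_range]
    have h2 : 2 * ((range N) \ S).card ≤ N := by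
      have hle : S.card ≤ N := by
        have := Finset.card_le_card hSN; simpa using this
      omega
    by_cases hN2 : 2 ≤ N
    case neg =>
      -- N ≤ 1 : min is 0
      interval_cases N
      · simp
      · have : S.card ≤ 1 := by have := Finset.card_le_card hSN; simpa using this
        omega
    case pos =>
      rw [bdry_compl N S]
      have := main N IH ((range N) \ S) (Finset.sdiff_subset) h2 hN2
      omega
  case pos =>
    by_cases hN2 : 2 ≤ N
    case neg =>
      interval_cases N
      · simp
      · have : S.card = 0 := by omega
        simp [this]
    case pos =>
      have := main N IH S hSN hhalf hN2
      omega
where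
  main (N : ℕ) (IH : ∀ M, M < N → ∀ S : Finset ℕ, S ⊆ range M →
      min S.card (M - S.card) ≤ (bdry M S).card)
      (S : Finset ℕ) (hSN : S ⊆ range N) (hhalf : 2 * S.card ≤ N) (hN2 : 2 ≤ N) :
      S.card ≤ (bdry N S).card := by
    set E := (N + 1) / 2 with hE
    set O := N / 2 with hO
    -- halves
    set Se : Finset ℕ := (range E).filter (fun k => 2 * k ∈ S) with hSe
    set So : Finset ℕ := (range O).filter (fun k => 2 * k + 1 ∈ S) with hSo
    set SeO : Finset ℕ := (range O).filter (fun k => 2 * k ∈ S) with hSeO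
    set C : Finset ℕ := (range O).filter (fun k => ((2 * k ∈ S) ↔ (2 * k + 1 ∉ S))) with hC
    -- cardinal identities
    have hsplit : S.card = Se.card + So.card := by
      rw [← Finset.card_filter_add_card_filter_not (p := fun m => m % 2 = 0) (s := S)]
      congr 1
      · rw [hSe]
        apply Finset.card_nbij (i := fun m => m / 2)
        · intro m hm
          simp only [Finset.mem_coe, mem_filter, mem_range] at *
          obtain ⟨hmS, hm2⟩ := hm
          have hmN := hSN hmS
          simp only [mem_range] at hmN
          constructor
          · omega
          · have : 2 * (m / 2) = m := by omega
            rw [this]; exact hmS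
        · intro m hm m' hm' hmm
          simp only [Finset.mem_coe, mem_filter] at hm hm'
          dsimp only at hmm
          omega
        · intro k hk
          simp only [Finset.mem_coe, mem_filter, mem_range] at hk
          exact ⟨2 * k, by simp only [Finset.mem_coe, mem_filter]; exact ⟨hk.2, by omega⟩, by dsimp only; omega⟩
      · rw [hSo]
        apply Finset.card_nbij (i := fun m => m / 2)
        · intro m hm
          simp only [Finset.mem_coe, mem_filter, mem_range] at *
          obtain ⟨hmS, hm2⟩ := hm
          have hmN := hSN hmS
          simp only [mem_range] at hmN
          constructor
          · omega
          · have : 2 * (m / 2) + 1 = m := by omega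
            rw [this]; exact hmS
        · intro m hm m' hm' hmm
          simp only [Finset.mem_coe, mem_filter] at hm hm'
          dsimp only at hmm
          omega
        · intro k hk
          simp only [Finset.mem_coe, mem_filter, mem_range] at hk
          exact ⟨2 * k + 1, by simp only [Finset.mem_coe, mem_filter]; exact ⟨hk.2, by omega⟩, by dsimp only; omega⟩
    -- IH applications
    have hIHe : min Se.card (E - Se.card) ≤ (bdry E Se).card := by
      apply IH E (by omega)
      exact Finset.filter_subset _ _ |>.trans (by simp)
    have hIHo : min So.card (O - So.card) ≤ (bdry O So).card := by
      apply IH O (by omega)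
      exact Finset.filter_subset _ _ |>.trans (by simp)
    -- cross inequalities
    have hc1 : SeO.card ≤ So.card + C.card := by
      have hsub : SeO ⊆ So ∪ C := by
        intro k hk
        simp only [hSeO, hSo, hC, mem_filter, mem_range, Finset.mem_union] at *
        by_cases h : 2 * k + 1 ∈ S
        · left; exact ⟨hk.1, h⟩
        · right; exact ⟨hk.1, by tauto⟩
      calc SeO.card ≤ (So ∪ C).card := Finset.card_le_card hsub
        _ ≤ So.card + C.card := Finset.card_union_le _ _
    have hc2 : So.card ≤ SeO.card + C.card := by
      have hsub : So ⊆ SeO ∪ C := by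
        intro k hk
        simp only [hSeO, hSo, hC, mem_filter, mem_range, Finset.mem_union] at *
        by_cases h : 2 * k ∈ S
        · left; exact ⟨hk.1, h⟩
        · right; exact ⟨hk.1, by tauto⟩
      calc So.card ≤ (SeO ∪ C).card := Finset.card_le_card hsub
        _ ≤ SeO.card + C.card := Finset.card_union_le _ _
    have hc3 : SeO.card ≤ Se.card := by
      apply Finset.card_le_card
      intro k hk
      simp only [hSeO, hSe, mem_filter, mem_range] at *
      exact ⟨by omega, hk.2⟩
    have hc4 : Se.card ≤ SeO.card + (E - O) := by
      have hsub : Se ⊆ SeO ∪ ((range E) \ (range O)) := by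
        intro k hk
        simp only [hSe, hSeO, mem_filter, mem_range, Finset.mem_union, Finset.mem_sdiff,
          mem_range] at *
        by_cases h : k < O
        · left; exact ⟨h, hk.2⟩
        · right; exact ⟨hk.1, h⟩
      calc Se.card ≤ (SeO ∪ ((range E) \ (range O))).card := Finset.card_le_card hsub
        _ ≤ SeO.card + ((range E) \ (range O)).card := Finset.card_union_le _ _
        _ = SeO.card + (E - O) := by
            rw [Finset.card_sdiff_of_subset (by apply Finset.range_subset_range.mpr; omega)]
            simp
    -- the three injections into bdry N S
    have hkey_e : ∀ m, m % 2 = 0 → (m ∈ S ↔ m / 2 ∈ Se) := by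
      intro m hm
      simp only [hSe, mem_filter, mem_range]
      constructor
      · intro h
        have := hSN h
        simp only [mem_range] at this
        exact ⟨by omega, by rw [show 2 * (m / 2) = m by omega]; exact h⟩
      · rintro ⟨-, h⟩
        rwa [show 2 * (m / 2) = m by omega] at h
    have hkey_o : ∀ m, m % 2 = 1 → (m ∈ S ↔ m / 2 ∈ So) := by
      intro m hm
      simp only [hSo, mem_filter, mem_range]
      constructor
      · intro h
        have := hSN h
        simp only [mem_range] at this
        exact ⟨by omega, by rw [show 2 * (m / 2) + 1 = m by omega]; exact h⟩
      · rintro ⟨-, h⟩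
        rwa [show 2 * (m / 2) + 1 = m by omega] at h
    set u1 : Finset (ℕ × ℕ) := (bdry E Se).image (fun p => (2 * p.1, p.2 + 1)) with hu1
    set u2 : Finset (ℕ × ℕ) := (bdry O So).image (fun p => (2 * p.1 + 1, p.2 + 1)) with hu2
    set u3 : Finset (ℕ × ℕ) := C.image (fun k => (2 * k, 0)) with hu3
    have hdiv1 : ∀ m j : ℕ, (2 * m) / 2 ^ (j + 1) = m / 2 ^ j := by
      intro m j
      rw [pow_succ, mul_comm (2^j) 2, ← Nat.div_div_eq_div_mul]
      congr 1
      omega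
    have hdiv2 : ∀ m j : ℕ, (2 * m + 1) / 2 ^ (j + 1) = m / 2 ^ j := by
      intro m j
      rw [pow_succ, mul_comm (2^j) 2, ← Nat.div_div_eq_div_mul]
      congr 1
      omega
    have h2E : 2 * E ≤ N + 1 := by omega
    have h2O : 2 * O ≤ N := by omega
    have hu1sub : u1 ⊆ bdry N S := by
      intro q hq
      simp only [hu1, Finset.mem_image] at hq
      obtain ⟨p, hp, rfl⟩ := hq
      rw [mem_bdry] at hp
      rw [mem_bdry']
      obtain ⟨h1, h2, h3, h4, h5⟩ := hp
      have hpow : 2 ^ (p.2 + 1) = 2 * 2 ^ p.2 := by ring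
      refine ⟨by omega, ?_, by omega, ?_, ?_⟩
      · have : p.2 + 1 < 2 ^ (p.2 + 1) := Nat.lt_two_pow_self
        omega
      · rw [hdiv1]; exact h4
      · rw [show 2 * p.1 + 2 ^ (p.2 + 1) = 2 * (p.1 + 2 ^ p.2) by ring]
        rw [hkey_e (2 * p.1) (by omega), hkey_e (2 * (p.1 + 2 ^ p.2)) (by omega)]
        rw [show 2 * p.1 / 2 = p.1 by omega, show 2 * (p.1 + 2 ^ p.2) / 2 = p.1 + 2 ^ p.2 by omega]
        exact h5
    have hu2sub : u2 ⊆ bdry N S := by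
      intro q hq
      simp only [hu2, Finset.mem_image] at hq
      obtain ⟨p, hp, rfl⟩ := hq
      rw [mem_bdry] at hp
      rw [mem_bdry']
      obtain ⟨h1, h2, h3, h4, h5⟩ := hp
      have hpow : 2 ^ (p.2 + 1) = 2 * 2 ^ p.2 := by ring
      refine ⟨by omega, ?_, by omega, ?_, ?_⟩
      · have : p.2 + 1 < 2 ^ (p.2 + 1) := Nat.lt_two_pow_self
        omega
      · rw [hdiv2]; exact h4
      · rw [show 2 * p.1 + 1 + 2 ^ (p.2 + 1) = 2 * (p.1 + 2 ^ p.2) + 1 by ring]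
        rw [hkey_o (2 * p.1 + 1) (by omega), hkey_o (2 * (p.1 + 2 ^ p.2) + 1) (by omega)]
        rw [show (2 * p.1 + 1) / 2 = p.1 by omega,
          show (2 * (p.1 + 2 ^ p.2) + 1) / 2 = p.1 + 2 ^ p.2 by omega]
        exact h5
    have hu3sub : u3 ⊆ bdry N S := by
      intro q hq
      simp only [hu3, Finset.mem_image] at hq
      obtain ⟨k, hk, rfl⟩ := hq
      simp only [hC, mem_filter, mem_range] at hk
      rw [mem_bdry]
      refine ⟨by omega, by omega, by simpa using (by omega : 2 * k + 1 < N), ?_, ?_⟩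
      · simp
      · simpa using hk.2
    -- disjointness
    have hd12 : Disjoint u1 u2 := by
      rw [Finset.disjoint_left]
      intro q hq1 hq2
      simp only [hu1, hu2, Finset.mem_image] at hq1 hq2
      obtain ⟨p, -, hp⟩ := hq1
      obtain ⟨p', -, hp'⟩ := hq2
      rw [← hp'] at hp
      have := congrArg Prod.fst hp
      simp at this
      omega
    have hd13 : Disjoint u1 u3 := by
      rw [Finset.disjoint_left]
      intro q hq1 hq3
      simp only [hu1, hu3, Finset.mem_image] at hq1 hq3
      obtain ⟨p, -, hp⟩ := hq1
      obtain ⟨k, -, hk⟩ := hq3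
      rw [← hk] at hp
      have := congrArg Prod.snd hp
      simp at this
    have hd23 : Disjoint u2 u3 := by
      rw [Finset.disjoint_left]
      intro q hq2 hq3
      simp only [hu2, hu3, Finset.mem_image] at hq2 hq3
      obtain ⟨p, -, hp⟩ := hq2
      obtain ⟨k, -, hk⟩ := hq3
      rw [← hk] at hp
      have := congrArg Prod.fst hp
      simp at this
      omega
    have hcard1 : u1.card = (bdry E Se).card := by
      apply Finset.card_image_of_injective
      intro p p' h
      simp only [Prod.mk.injEq] at h
      exact Prod.ext (by omega) (by omega)
    have hcard2 : u2.card = (bdry O So).card := by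
      apply Finset.card_image_of_injective
      intro p p' h
      simp only [Prod.mk.injEq] at h
      exact Prod.ext (by omega) (by omega)
    have hcard3 : u3.card = C.card := by
      apply Finset.card_image_of_injective
      intro k k' h
      simp only [Prod.mk.injEq] at h
      omega
    have hunion : (u1 ∪ u2 ∪ u3).card ≤ (bdry N S).card := by
      apply Finset.card_le_card
      intro q hq
      simp only [Finset.mem_union] at hq
      rcases hq with (h | h) | h
      · exact hu1sub h
      · exact hu2sub h
      · exact hu3sub h
    have hucard : (u1 ∪ u2 ∪ u3).card = u1.card + u2.card + u3.card := by
      rw [Finset.card_union_of_disjoint, Finset.card_union_of_disjoint hd12]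
      rw [Finset.disjoint_union_left]
      exact ⟨hd13, hd23⟩
    -- final arithmetic
    have hbe : Se.card ≤ E := by
      have : Se ⊆ range E := Finset.filter_subset _ _
      have := Finset.card_le_card this
      simpa using this
    have hbo : So.card ≤ O := by
      have : So ⊆ range O := Finset.filter_subset _ _
      have := Finset.card_le_card this
      simpa using this
    omega

-- ===== dictionary =====


section Dict

/-- the 0/1 vector in `ℝ^d` with binary digits of `n` -/
noncomputable def vecN (d : ℕ) (n : ℕ) : Fin d → ℝ :=
  fun i => if n / 2 ^ (i : ℕ) % 2 = 1 then 1 else 0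

open scoped Classical in
/-- the `j`-th binary digit of a 0/1 vector -/
noncomputable def bitOf (d : ℕ) (x : Fin d → ℝ) (j : ℕ) : ℕ :=
  if h : j < d then (if x ⟨j, h⟩ = 1 then 1 else 0) else 0

/-- the number whose binary digits are given by the 0/1 vector `x` -/
noncomputable def valN (d : ℕ) (x : Fin d → ℝ) : ℕ :=
  ∑ j ∈ range d, bitOf d x j * 2 ^ j

lemma bitOf_le_one (d : ℕ) (x : Fin d → ℝ) (j : ℕ) : bitOf d x j ≤ 1 := by
  unfold bitOf
  split <;> [skip; omega]
  split <;> omega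

lemma sum_bits_lt (d : ℕ) (b : ℕ → ℕ) (hb : ∀ j, b j ≤ 1) :
    ∑ j ∈ range d, b j * 2 ^ j < 2 ^ d := by
  induction d with
  | zero => simp
  | succ d IH =>
    rw [Finset.sum_range_succ]
    have := hb d
    have h2 : (2:ℕ) ^ (d+1) = 2 ^ d + 2 ^ d := by ring
    have hbd : b d * 2 ^ d ≤ 2 ^ d := by
      calc b d * 2 ^ d ≤ 1 * 2 ^ d := Nat.mul_le_mul_right _ this
      _ = 2 ^ d := one_mul _
    omega

lemma bit_sum (d : ℕ) (b : ℕ → ℕ) (hb : ∀ j, b j ≤ 1) :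
    ∀ i < d, (∑ j ∈ range d, b j * 2 ^ j) / 2 ^ i % 2 = b i := by
  induction d with
  | zero => omega
  | succ d IH =>
    intro i hi
    rw [Finset.sum_range_succ]
    rcases Nat.lt_or_ge i d with hid | hid
    · -- adding b d * 2^d does not change bit i
      have hsplit : b d * 2 ^ d = (b d * 2 ^ (d - i - 1) * 2) * 2 ^ i := by
        rw [mul_assoc, mul_assoc, ← pow_succ']
        rw [← pow_add]
        congr 2
        omega
      rw [hsplit, Nat.add_mul_div_right _ _ (Nat.two_pow_pos i),
        Nat.add_mul_mod_self_right]
      exact IH i hid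
    · -- i = d
      have hieq : i = d := by omega
      subst hieq
      have hlt : ∑ j ∈ range i, b j * 2 ^ j < 2 ^ i := sum_bits_lt i b hb
      rw [show b i * 2 ^ i = 2 ^ i * b i by ring, Nat.add_mul_div_left _ _
        (Nat.two_pow_pos i), Nat.div_eq_of_lt hlt]
      have := hb i
      omega

lemma valN_lt (d : ℕ) (x : Fin d → ℝ) : valN d x < 2 ^ d :=
  sum_bits_lt d _ (bitOf_le_one d x)

lemma vecN_mem_zeroOne (d n : ℕ) : vecN d n ∈ ZeroOne d := by
  intro i
  unfold vecN
  split <;> simp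

lemma vecN_valN {d : ℕ} {x : Fin d → ℝ} (hx : x ∈ ZeroOne d) : vecN d (valN d x) = x := by
  funext i
  unfold vecN
  rw [valN, bit_sum d _ (bitOf_le_one d x) (i : ℕ) i.isLt]
  unfold bitOf
  rw [dif_pos i.isLt]
  rcases hx i with h | h <;> rw [Fin.eta] <;> simp [h]

lemma sum_bits_eq : ∀ d n : ℕ, n < 2 ^ d → ∑ j ∈ range d, (n / 2 ^ j % 2) * 2 ^ j = n := by
  intro d
  induction d with
  | zero => intro n hn; simp at hn ⊢; omega
  | succ d IH =>
    intro n hn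
    rw [Finset.sum_range_succ]
    rcases Nat.lt_or_ge n (2 ^ d) with h | h
    · rw [IH n h, Nat.div_eq_of_lt h]
      simp
    · have hn2 : n / 2 ^ d % 2 = 1 := by
        have h1 : n / 2 ^ d ≥ 1 := (Nat.one_le_div_iff (Nat.two_pow_pos d)).mpr h
        have h2 : n / 2 ^ d < 2 := by
          rw [Nat.div_lt_iff_lt_mul (Nat.two_pow_pos d)]
          rw [pow_succ] at hn
          omega
        omega
      set n' := n - 2 ^ d with hn'
      have hnn : n = n' + 2 ^ d := by
        have : 2 ^ d ≤ n := h
        omega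
      have hn'lt : n' < 2 ^ d := by
        rw [pow_succ] at hn
        omega
      have hsame : ∀ j ∈ range d, n / 2 ^ j % 2 * 2 ^ j = n' / 2 ^ j % 2 * 2 ^ j := by
        intro j hj
        have hjd := mem_range.mp hj
        congr 1
        rw [hnn, show (2:ℕ) ^ d = (2 ^ (d - j - 1) * 2) * 2 ^ j by rw [mul_assoc, ← pow_succ', ← pow_add]; congr 1; omega]
        rw [Nat.add_mul_div_right _ _ (Nat.two_pow_pos j),
          Nat.add_mul_mod_self_right]
      rw [Finset.sum_congr rfl hsame, IH n' hn'lt, hn2]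
      omega

lemma valN_vecN {d : ℕ} {n : ℕ} (hn : n < 2 ^ d) : valN d (vecN d n) = n := by
  -- valN d (vecN d n) = ∑ j in range d, (n / 2^j % 2) * 2^j = n
  have hbit : ∀ j, bitOf d (vecN d n) j = if j < d then n / 2 ^ j % 2 else 0 := by
    intro j
    unfold bitOf vecN
    by_cases h : j < d
    · rw [dif_pos h, if_pos h]
      have : n / 2 ^ j % 2 = 1 ∨ n / 2 ^ j % 2 = 0 := by omega
      rcases this with h1 | h1 <;> simp [h1]
    · rw [dif_neg h, if_neg h]
  rw [valN]
  have : ∀ j ∈ range d, bitOf d (vecN d n) j * 2 ^ j = (n / 2 ^ j % 2) * 2 ^ j := by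
    intro j hj
    rw [hbit j, if_pos (mem_range.mp hj)]
  rw [Finset.sum_congr rfl this]
  exact sum_bits_eq d n hn

end Dict

section Dict2

lemma rlex_val_lt {d : ℕ} {x y : Fin d → ℝ} (hx : x ∈ ZeroOne d) (hy : y ∈ ZeroOne d)
    (h : RlexLt x y) : valN d x < valN d y := by
  obtain ⟨m, hm, hgt⟩ := h
  have hxm : x m = 0 := by
    rcases hx m with h0 | h0
    · exact h0
    · rcases hy m with h1 | h1 <;> rw [h0] at hm <;> rw [h1] at hm <;> linarith
  have hym : y m = 1 := by
    rcases hy m with h1 | h1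
    · rcases hx m with h0 | h0 <;> rw [h0] at hm <;> rw [h1] at hm <;> linarith
    · exact h1
  have hmd : (m : ℕ) + 1 ≤ d := m.isLt
  have hsplitx := Finset.sum_range_add_sum_Ico (fun j => bitOf d x j * 2 ^ j) hmd
  have hsplity := Finset.sum_range_add_sum_Ico (fun j => bitOf d y j * 2 ^ j) hmd
  have htail : ∑ j ∈ Finset.Ico ((m : ℕ) + 1) d, bitOf d x j * 2 ^ j
      = ∑ j ∈ Finset.Ico ((m : ℕ) + 1) d, bitOf d y j * 2 ^ j := by
    apply Finset.sum_congr rfl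
    intro j hj
    rw [Finset.mem_Ico] at hj
    have hjd : j < d := hj.2
    have : x ⟨j, hjd⟩ = y ⟨j, hjd⟩ := by
      apply hgt
      rw [Fin.lt_def]
      simp only
      omega
    unfold bitOf
    rw [dif_pos hjd, dif_pos hjd, this]
  have hbxm : bitOf d x (m : ℕ) = 0 := by
    unfold bitOf
    rw [dif_pos m.isLt, Fin.eta, hxm]
    norm_num
  have hbym : bitOf d y (m : ℕ) = 1 := by
    unfold bitOf
    rw [dif_pos m.isLt, Fin.eta, hym]
    norm_num
  have hlowx : ∑ j ∈ Finset.range ((m : ℕ) + 1), bitOf d x j * 2 ^ j < 2 ^ (m : ℕ) := by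
    rw [Finset.sum_range_succ, hbxm]
    simpa using sum_bits_lt (m : ℕ) _ (bitOf_le_one d x)
  have hlowy : 2 ^ (m : ℕ) ≤ ∑ j ∈ Finset.range ((m : ℕ) + 1), bitOf d y j * 2 ^ j := by
    rw [Finset.sum_range_succ, hbym]
    omega
  unfold valN
  omega

lemma rlex_iff {d : ℕ} {x y : Fin d → ℝ} (hx : x ∈ ZeroOne d) (hy : y ∈ ZeroOne d) :
    RlexLt x y ↔ valN d x < valN d y := by
  classical
  constructor
  · exact rlex_val_lt hx hy
  · intro hlt
    have hne : x ≠ y := by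
      intro h
      rw [h] at hlt
      omega
    set D : Finset (Fin d) := Finset.univ.filter (fun i => x i ≠ y i) with hD
    have hDne : D.Nonempty := by
      rw [Function.ne_iff] at hne
      obtain ⟨i, hi⟩ := hne
      exact ⟨i, by simp [hD, hi]⟩
    set m := D.max' hDne with hm
    have hmD : m ∈ D := D.max'_mem hDne
    have hgt : ∀ i : Fin d, m < i → x i = y i := by
      intro i hi
      by_contra hne'
      have : i ∈ D := by simp [hD, hne']
      have := D.le_max' i this
      exact absurd (lt_of_lt_of_le hi this) (lt_irrefl _)
    have hxym : x m ≠ y m := by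
      simp [hD] at hmD
      exact hmD
    rcases hx m with h0 | h0 <;> rcases hy m with h1 | h1
    · exact absurd (h0.trans h1.symm) hxym
    · exact ⟨m, by rw [h0, h1]; norm_num, hgt⟩
    · exfalso
      have : RlexLt y x := ⟨m, by rw [h0, h1]; norm_num, fun i hi => (hgt i hi).symm⟩
      have := rlex_val_lt hy hx this
      omega
    · exact absurd (h0.trans h1.symm) hxym

lemma mem_Xset_iff {d : ℕ} {v : Fin d → ℝ} (hv : v ∈ ZeroOne d) {x : Fin d → ℝ} :
    x ∈ Xset v ↔ x ∈ ZeroOne d ∧ valN d x < valN d v := by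
  unfold Xset
  constructor
  · rintro ⟨h1, h2⟩
    exact ⟨h1, rlex_val_lt h1 hv h2⟩
  · rintro ⟨h1, h2⟩
    exact ⟨h1, (rlex_iff h1 hv).mpr h2⟩

lemma Xset_eq_image {d : ℕ} {v : Fin d → ℝ} (hv : v ∈ ZeroOne d) :
    Xset v = vecN d '' {n : ℕ | n < valN d v} := by
  ext x
  rw [mem_Xset_iff hv]
  constructor
  · rintro ⟨h1, h2⟩
    exact ⟨valN d x, h2, vecN_valN h1⟩
  · rintro ⟨n, hn, rfl⟩
    have hnd : n < 2 ^ d := lt_trans hn (valN_lt d v)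
    exact ⟨vecN_mem_zeroOne d n, by rw [valN_vecN hnd]; exact hn⟩

lemma ncard_Xset {d : ℕ} {v : Fin d → ℝ} (hv : v ∈ ZeroOne d) :
    (Xset v).ncard = valN d v := by
  rw [Xset_eq_image hv]
  rw [show {n : ℕ | n < valN d v} = ↑(Finset.range (valN d v)) by ext n; simp]
  rw [Set.ncard_image_of_injOn, Set.ncard_coe_finset, Finset.card_range]
  intro a ha b hb hab
  simp only [Finset.coe_range, Set.mem_Iio] at ha hb
  have hda : a < 2 ^ d := lt_trans ha (valN_lt d v)
  have hdb : b < 2 ^ d := lt_trans hb (valN_lt d v)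
  rw [← valN_vecN hda, ← valN_vecN hdb, hab]

/-- bit arithmetic: adding `2^j` to a number whose bit `j` is zero -/
lemma pow_mod_lt {m j : ℕ} (h : m / 2 ^ j % 2 = 0) : m % 2 ^ (j + 1) < 2 ^ j := by
  have hpos : 0 < (2:ℕ) ^ j := Nat.two_pow_pos j
  have hkey : m % (2 ^ j * 2) / 2 ^ j = m / 2 ^ j % 2 := (Nat.mod_mul_right_div_self m _ _)
  rw [pow_succ]
  rw [h] at hkey
  have := Nat.mod_lt m (show 0 < 2^j*2 by positivity)
  rcases Nat.lt_or_ge (m % (2 ^ j * 2)) (2 ^ j) with h' | h'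
  · exact h'
  · exfalso
    have : m % (2 ^ j * 2) / 2 ^ j ≥ 1 := (Nat.one_le_div_iff hpos).mpr h'
    omega

lemma bit_add_pow {m j : ℕ} (h : m / 2 ^ j % 2 = 0) (i : ℕ) :
    (m + 2 ^ j) / 2 ^ i % 2 = if i = j then 1 else m / 2 ^ i % 2 := by
  have hposi : 0 < (2:ℕ) ^ i := Nat.two_pow_pos i
  have hposj : 0 < (2:ℕ) ^ j := Nat.two_pow_pos j
  rcases lt_trichotomy i j with hij | heq | hij
  · rw [if_neg (by omega)]
    rw [show (2:ℕ) ^ j = (2 ^ (j - i - 1) * 2) * 2 ^ i by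
      rw [mul_assoc, ← pow_succ', ← pow_add]; congr 1; omega]
    rw [Nat.add_mul_div_right _ _ hposi, Nat.add_mul_mod_self_right]
  · subst heq
    rw [if_pos rfl]
    have hlt : m % 2 ^ (i + 1) < 2 ^ i := pow_mod_lt h
    have hm := (Nat.div_add_mod m (2 ^ (i + 1))).symm
    set q := m / 2 ^ (i + 1) with hq
    set r := m % 2 ^ (i + 1) with hr
    have hrewrite : m + 2 ^ i = (r + 2 ^ i) + 2 ^ i * (2 * q) := by
      rw [hm, pow_succ]; ring
    rw [hrewrite, Nat.add_mul_div_left _ _ hposi]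
    have hr1 : (r + 2 ^ i) / 2 ^ i = 1 := by
      apply Nat.div_eq_of_lt_le <;> omega
    rw [hr1]
    omega
  · rw [if_neg (by omega)]
    -- (m + 2^j) / 2^i = m / 2^i  since  m % 2^i + 2^j < 2^i
    have hdvd : (2:ℕ) ^ (j + 1) ∣ 2 ^ i := pow_dvd_pow 2 (by omega)
    have hmod : m % 2 ^ i % 2 ^ (j + 1) = m % 2 ^ (j + 1) := Nat.mod_mod_of_dvd m hdvd
    have hlt : m % 2 ^ (j + 1) < 2 ^ j := pow_mod_lt h
    set r := m % 2 ^ i with hrdef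
    have hrlt : r < 2 ^ i := Nat.mod_lt m hposi
    have hkey : r + 2 ^ j < 2 ^ i := by
      have h1 : r % 2 ^ (j + 1) < 2 ^ j := by rw [hmod]; exact hlt
      have h2 : r / 2 ^ (j + 1) < 2 ^ (i - j - 1) := by
        rw [Nat.div_lt_iff_lt_mul (Nat.two_pow_pos _), ← pow_add]
        rw [show i - j - 1 + (j + 1) = i by omega]
        exact hrlt
      have h3 := (Nat.div_add_mod r (2 ^ (j + 1))).symm
      have h4 : (r / 2 ^ (j + 1) + 1) * 2 ^ (j + 1) ≤ 2 ^ (i - j - 1) * 2 ^ (j + 1) :=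
        Nat.mul_le_mul_right _ (by omega)
      rw [← pow_add, show i - j - 1 + (j + 1) = i by omega] at h4
      have h5 : (r / 2 ^ (j + 1) + 1) * 2 ^ (j + 1) = 2 ^ (j + 1) * (r / 2 ^ (j + 1)) + 2 ^ (j + 1) := by ring
      have h6 : (2:ℕ) ^ (j + 1) = 2 * 2 ^ j := by rw [pow_succ]; ring
      omega
    have hdiveq : (m + 2 ^ j) / 2 ^ i = m / 2 ^ i := by
      have hdm := Nat.div_add_mod m (2 ^ i)
      rw [show m + 2 ^ j = (r + 2 ^ j) + 2 ^ i * (m / 2 ^ i) by omega,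
        Nat.add_mul_div_left _ _ hposi, Nat.div_eq_of_lt hkey]
      omega
    rw [hdiveq]

lemma vecN_add_pow {d m j : ℕ} (h : m / 2 ^ j % 2 = 0) (hj : j < d) :
    ∀ i : Fin d, vecN d (m + 2 ^ j) i = if (i : ℕ) = j then 1 else vecN d m i := by
  intro i
  unfold vecN
  rw [bit_add_pow h (i : ℕ)]
  by_cases hij : (i : ℕ) = j
  · rw [if_pos hij, if_pos hij, if_pos rfl]
  · rw [if_neg hij, if_neg hij]

lemma vecN_bit_zero {d m j : ℕ} (h : m / 2 ^ j % 2 = 0) (hj : j < d) :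
    vecN d m ⟨j, hj⟩ = 0 := by
  unfold vecN
  simp only
  rw [if_neg (by omega)]

end Dict2

section Geom

/-- the linear functional with coefficient vector `w` -/
noncomputable def lf {d : ℕ} (w : Fin d → ℝ) : (Fin d → ℝ) →ₗ[ℝ] ℝ where
  toFun p := ∑ i, w i * p i
  map_add' p q := by
    simp only [Pi.add_apply, mul_add]
    rw [Finset.sum_add_distrib]
  map_smul' c p := by
    simp only [Pi.smul_apply, smul_eq_mul, RingHom.id_apply]
    rw [Finset.mul_sum]
    congr 1
    funext i
    ring

lemma lf_apply {d : ℕ} (w p : Fin d → ℝ) : lf w p = ∑ i, w i * p i := rfl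

lemma isFaceOf_segment {d : ℕ} (X : Set (Fin d → ℝ)) (w : Fin d → ℝ) (x y : Fin d → ℝ)
    (hx : x ∈ X) (hy : y ∈ X) (hxy : x ≠ y)
    (hmax : ∀ z ∈ X, lf w z ≤ lf w x) (hyx : lf w y = lf w x)
    (heq : ∀ z ∈ X, lf w z = lf w x → z = x ∨ z = y) :
    IsFaceOf (convexHull ℝ X) (segment ℝ x y) ∧ adim (segment ℝ x y) = 1 := by
  set c := lf w x with hc
  have hseg_sub : segment ℝ x y ⊆ convexHull ℝ X := by
    rw [← convexHull_pair]
    apply convexHull_mono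
    intro z hz
    rcases hz with rfl | hz
    · exact hx
    · rw [Set.mem_singleton_iff] at hz; subst hz; exact hy
  have hhalf : ∀ p ∈ convexHull ℝ X, lf w p ≤ c := by
    intro p hp
    have hsub : X ⊆ {q | lf w q ≤ c} := fun z hz => hmax z hz
    have hconv : Convex ℝ {q : Fin d → ℝ | lf w q ≤ c} :=
      convex_halfSpace_le (LinearMap.isLinear (lf w)) c
    exact convexHull_min hsub hconv hp
  have hback : ∀ p ∈ convexHull ℝ X, lf w p = c → p ∈ segment ℝ x y := by
    intro p hp hpc
    rw [_root_.convexHull_eq] at hp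
    obtain ⟨ι, t, wt, z, hw0, hw1, hzX, hcm⟩ := hp
    rw [Finset.centerMass_eq_of_sum_1 _ _ hw1] at hcm
    have hlfz : ∀ i ∈ t, lf w (z i) ≤ c := fun i hi => hmax _ (hzX i hi)
    have hlfp : lf w p = ∑ i ∈ t, wt i * lf w (z i) := by
      rw [← hcm, map_sum]
      congr 1
      funext i
      rw [map_smul, smul_eq_mul]
    have hzero : ∑ i ∈ t, wt i * (c - lf w (z i)) = 0 := by
      have : ∑ i ∈ t, wt i * (c - lf w (z i))
          = (∑ i ∈ t, wt i) * c - ∑ i ∈ t, wt i * lf w (z i) := by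
        rw [Finset.sum_mul, ← Finset.sum_sub_distrib]
        congr 1
        funext i
        ring
      rw [this, hw1, ← hlfp, hpc]
      ring
    have hterms : ∀ i ∈ t, wt i * (c - lf w (z i)) = 0 := by
      rw [← Finset.sum_eq_zero_iff_of_nonneg]
      · exact hzero
      · intro i hi
        have h1 := hw0 i hi
        have h2 := hlfz i hi
        nlinarith
    set t' := t.filter (fun i => wt i ≠ 0) with ht'
    have hsum1' : ∑ i ∈ t', wt i = 1 := by
      rw [ht', Finset.sum_filter_ne_zero]
      exact hw1
    have hsump' : ∑ i ∈ t', wt i • z i = p := by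
      rw [← hcm]
      apply Finset.sum_subset (Finset.filter_subset _ _)
      intro i hi hni
      simp only [Finset.mem_filter, not_and, not_not] at hni
      rw [hni hi, zero_smul]
    rw [← hsump']
    apply Convex.sum_mem (convex_segment x y)
    · intro i hi
      exact hw0 i (Finset.mem_filter.mp hi).1
    · exact hsum1'
    · intro i hi
      rw [ht', Finset.mem_filter] at hi
      obtain ⟨hit, hwi⟩ := hi
      have := hterms i hit
      have hzc : lf w (z i) = c := by
        rcases mul_eq_zero.mp this with h | h
        · exact absurd h hwi
        · linarith
      rcases heq (z i) (hzX i hit) hzc with h | h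
      · rw [h]; exact left_mem_segment ℝ x y
      · rw [h]; exact right_mem_segment ℝ x y
  constructor
  · constructor
    · exact convex_segment x y
    · constructor
      · exact hseg_sub
      · intro p1 hp1 p2 hp2 q hq hqopen
        have hqc : lf w q = c := by
          obtain ⟨u, uv, hu, huv, hsum, rfl⟩ := hq
          rw [map_add, map_smul, map_smul, smul_eq_mul, smul_eq_mul, hyx, ← hc]
          rw [← add_mul, hsum, one_mul]
        obtain ⟨a, b, ha, hb, hab, hq'⟩ := hqopen
        have h1 : lf w p1 ≤ c := hhalf p1 hp1
        have h2 : lf w p2 ≤ c := hhalf p2 hp2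
        have hcomb : a * lf w p1 + b * lf w p2 = c := by
          rw [← hqc, ← hq', map_add, map_smul, map_smul, smul_eq_mul, smul_eq_mul]
        have ha1 : a * lf w p1 ≤ a * c := mul_le_mul_of_nonneg_left h1 ha.le
        have hb2 : b * lf w p2 ≤ b * c := mul_le_mul_of_nonneg_left h2 hb.le
        have hac : a * c + b * c = c := by rw [← add_mul, hab, one_mul]
        have he1' : a * lf w p1 = a * c := by linarith
        have he2' : b * lf w p2 = b * c := by linarith
        have he1 : lf w p1 = c := mul_left_cancel₀ (ne_of_gt ha) he1'
        have he2 : lf w p2 = c := mul_left_cancel₀ (ne_of_gt hb) he2'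
        exact hback p1 hp1 he1
  · unfold adim
    rw [← convexHull_pair, affineSpan_convexHull, direction_affineSpan, vectorSpan_pair]
    apply finrank_span_singleton
    rw [vsub_eq_sub, sub_ne_zero]
    exact hxy

lemma cube_edge_face {d : ℕ} {v : Fin d → ℝ} (hv : v ∈ ZeroOne d) {m j : ℕ}
    (hk : m + 2 ^ j < valN d v) (hb : m / 2 ^ j % 2 = 0) :
    vecN d m ∈ Xset v ∧ vecN d (m + 2 ^ j) ∈ Xset v ∧ vecN d m ≠ vecN d (m + 2 ^ j) ∧
    IsFaceOf (Pset v) (segment ℝ (vecN d m) (vecN d (m + 2 ^ j))) ∧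
    adim (segment ℝ (vecN d m) (vecN d (m + 2 ^ j))) = 1 := by
  have hvd := valN_lt d v
  have hm : m < valN d v := lt_of_le_of_lt (Nat.le_add_right m (2 ^ j)) hk
  have hkd : m + 2 ^ j < 2 ^ d := hk.trans hvd
  have hj : j < d := by
    by_contra hj
    push_neg at hj
    have : (2:ℕ) ^ d ≤ 2 ^ j := Nat.pow_le_pow_right (by norm_num) hj
    omega
  set x := vecN d m with hxdef
  set y := vecN d (m + 2 ^ j) with hydef
  set jf : Fin d := ⟨j, hj⟩ with hjf
  have hyi : ∀ i : Fin d, y i = if (i : ℕ) = j then 1 else x i := vecN_add_pow hb hj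
  have hxj : x jf = 0 := vecN_bit_zero hb hj
  have hyj : y jf = 1 := by rw [hyi jf]; simp [hjf]
  have hxy : x ≠ y := by
    intro h
    rw [h] at hxj
    rw [hxj] at hyj
    norm_num at hyj
  have hxX : x ∈ Xset v := by
    rw [mem_Xset_iff hv]
    refine ⟨vecN_mem_zeroOne d m, ?_⟩
    rw [valN_vecN (by omega : m < 2 ^ d)]
    exact hm
  have hyX : y ∈ Xset v := by
    rw [mem_Xset_iff hv]
    refine ⟨vecN_mem_zeroOne d (m + 2 ^ j), ?_⟩
    rw [valN_vecN hkd]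
    exact hk
  set w : Fin d → ℝ := fun i => if (i : ℕ) = j then 0 else 2 * x i - 1 with hw
  have hx01 : x ∈ ZeroOne d := vecN_mem_zeroOne d m
  have hptw : ∀ z ∈ ZeroOne d, ∀ i : Fin d, w i * z i ≤ w i * x i := by
    intro z hz i
    rw [hw]
    by_cases hij : (i : ℕ) = j
    · simp [hij]
    · simp only [if_neg hij]
      rcases hx01 i with h0 | h0 <;> rcases hz i with h1 | h1 <;> rw [h0, h1] <;> norm_num
  have hmax : ∀ z ∈ Xset v, lf w z ≤ lf w x := by
    intro z hz
    have hz01 : z ∈ ZeroOne d := hz.1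
    rw [lf_apply, lf_apply]
    apply Finset.sum_le_sum
    intro i _
    exact hptw z hz01 i
  have hyeq : lf w y = lf w x := by
    rw [lf_apply, lf_apply]
    apply Finset.sum_congr rfl
    intro i _
    rw [hyi i]
    by_cases hij : (i : ℕ) = j
    · rw [hw]; simp [hij]
    · rw [if_neg hij]
  have heqc : ∀ z ∈ Xset v, lf w z = lf w x → z = x ∨ z = y := by
    intro z hz hzc
    have hz01 : z ∈ ZeroOne d := hz.1
    have hall : ∀ i ∈ Finset.univ, w i * z i = w i * x i := by
      rw [← Finset.sum_eq_sum_iff_of_le (fun i _ => hptw z hz01 i)]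
      rw [lf_apply, lf_apply] at hzc
      exact hzc
    have hagree : ∀ i : Fin d, (i : ℕ) ≠ j → z i = x i := by
      intro i hij
      have := hall i (Finset.mem_univ i)
      have hwi : w i ≠ 0 := by
        rw [hw]
        simp only [if_neg hij]
        rcases hx01 i with h0 | h0 <;> rw [h0] <;> norm_num
      exact mul_left_cancel₀ hwi this
    rcases hz01 jf with h0 | h0
    · left
      funext i
      by_cases hij : (i : ℕ) = j
      · have : i = jf := Fin.ext hij
        rw [this, h0, hxj]
      · exact hagree i hij
    · right
      funext i
      by_cases hij : (i : ℕ) = j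
      · have : i = jf := Fin.ext hij
        rw [this, h0, hyj]
      · rw [hagree i hij, hyi i, if_neg hij]
  have := isFaceOf_segment (Xset v) w x y hxX hyX hxy hmax hyeq heqc
  exact ⟨hxX, hyX, hxy, this.1, this.2⟩

/-- a 0/1 point on a segment between distinct 0/1 points is an endpoint -/
lemma zeroOne_seg {d : ℕ} {a b z : Fin d → ℝ} (ha : a ∈ ZeroOne d) (hb : b ∈ ZeroOne d)
    (hz : z ∈ ZeroOne d) (hab : a ≠ b) (hmem : z ∈ segment ℝ a b) : z = a ∨ z = b := by
  obtain ⟨u, t, hu, ht, hut, rfl⟩ := hmem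
  obtain ⟨i0, hi0⟩ : ∃ i, a i ≠ b i := Function.ne_iff.mp hab
  have hzi := hz i0
  simp only [Pi.add_apply, Pi.smul_apply, smul_eq_mul] at hzi
  have ht0 : t = 0 ∨ t = 1 := by
    rcases ha i0 with h0 | h0 <;> rcases hb i0 with h1 | h1
    · rw [h0, h1] at hi0; exact absurd rfl hi0
    · rw [h0, h1] at hzi
      rcases hzi with h | h
      · left; linarith
      · right; linarith
    · rw [h0, h1] at hzi
      rcases hzi with h | h
      · right; linarith
      · left; linarith
    · rw [h0, h1] at hi0; exact absurd rfl hi0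
  rcases ht0 with rfl | rfl
  · left
    have : u = 1 := by linarith
    subst this
    funext i
    simp
  · right
    have : u = 0 := by linarith
    subst this
    funext i
    simp

end Geom

section Asm

theorem coreFinal (N : ℕ) (S : Finset ℕ) (h1 : S ⊆ Finset.range N) (h2 : 2 * S.card ≤ N) :
    S.card ≤ (bdry N S).card := by
  have hmin := coreMin N S h1
  have hle : S.card ≤ N := by
    have := Finset.card_le_card h1
    simpa using this
  omega

lemma zeroOne_finite (d : ℕ) : (ZeroOne d).Finite := by
  apply Set.Finite.subset (Set.Finite.pi (fun _ : Fin d => (Set.finite_singleton (1:ℝ)).insert 0))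
  intro x hx
  rw [Set.mem_pi]
  intro i _
  rcases hx i with h | h
  · rw [h]; exact Set.mem_insert 0 {1}
  · rw [h]; exact Set.mem_insert_of_mem _ rfl

lemma Xset_finite {d : ℕ} (v : Fin d → ℝ) : (Xset v).Finite :=
  (zeroOne_finite d).subset (fun _ hx => hx.1)

/-- if `a ∈ openSegment x1 x2` with `x1, x2 ∈ segment a b` and `a ≠ b` then `x1 = x2 = a` -/
lemma open_seg_endpoint {d : ℕ} {a b x1 x2 : Fin d → ℝ} (hab : a ≠ b)
    (h1 : x1 ∈ segment ℝ a b) (h2 : x2 ∈ segment ℝ a b)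
    (hopen : a ∈ openSegment ℝ x1 x2) : x1 = a ∧ x2 = a := by
  obtain ⟨u1, v1, hu1, hv1, huv1, hx1⟩ := h1
  obtain ⟨u2, v2, hu2, hv2, huv2, hx2⟩ := h2
  obtain ⟨α, β, hα, hβ, hαβ, hsum⟩ := hopen
  set s := α * v1 + β * v2 with hs
  have hcoef : α * u1 + β * u2 + s = 1 := by
    rw [hs]
    linear_combination α * huv1 + β * huv2 + hαβ
  have hrep : (α * u1 + β * u2) • a + s • b = a := by
    conv_rhs => rw [← hsum, ← hx1, ← hx2]
    rw [hs]
    module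
  have hzero : s • (b - a) = 0 := by
    have h3 : (α * u1 + β * u2) • a + s • b - a = s • (b - a) := by
      rw [show α * u1 + β * u2 = 1 - s by linarith]
      module
    rw [hrep] at h3
    rw [← h3]
    abel
  have hs0 : s = 0 := by
    rcases smul_eq_zero.mp hzero with h | h
    · exact h
    · exact absurd (sub_eq_zero.mp h) (Ne.symm hab)
  have hv10 : v1 = 0 := by nlinarith
  have hv20 : v2 = 0 := by nlinarith
  constructor
  · rw [← hx1, hv10, zero_smul, add_zero, show u1 = 1 by linarith, one_smul]
  · rw [← hx2, hv20, zero_smul, add_zero, show u2 = 1 by linarith, one_smul]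

lemma target_subset {d : ℕ} (v : Fin d → ℝ) (S : Set (Fin d → ℝ)) :
    {e : Set (Fin d → ℝ) | ∃ a b : Fin d → ℝ,
        e = segment ℝ a b ∧ IsFaceOf (Pset v) e ∧ adim e = 1 ∧
        ((a ∈ S ∧ b ∉ S) ∨ (a ∉ S ∧ b ∈ S))}
      ⊆ (fun p : (Fin d → ℝ) × (Fin d → ℝ) => segment ℝ p.1 p.2) '' ((Xset v) ×ˢ (Xset v)) := by
  rintro e ⟨a, b, rfl, ⟨-, hext⟩, hdim, -⟩
  have hab : a ≠ b := by
    intro h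
    subst h
    rw [segment_same] at hdim
    unfold adim at hdim
    rw [direction_affineSpan] at hdim
    rw [show ({a} : Set (Fin d → ℝ)) = {a, a} by simp, vectorSpan_pair] at hdim
    rw [vsub_eq_sub, sub_self, Submodule.span_zero_singleton] at hdim
    simpa using hdim
  have hend : ∀ c ∈ segment ℝ a b, (∀ x1 ∈ Pset v, ∀ x2 ∈ Pset v,
      c ∈ openSegment ℝ x1 x2 → x1 ∈ segment ℝ a b ∧ x2 ∈ segment ℝ a b) := by
    intro c hc x1 hx1 x2 hx2 hopen
    exact ⟨hext.2 hx1 hx2 hc hopen, hext.2 hx2 hx1 hc (by rw [openSegment_symm]; exact hopen)⟩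
  have haP : a ∈ Pset v := hext.1 (left_mem_segment ℝ a b)
  have hbP : b ∈ Pset v := hext.1 (right_mem_segment ℝ a b)
  have haE : a ∈ Set.extremePoints ℝ (Pset v) := by
    refine ⟨haP, ?_⟩
    intro x1 hx1 x2 hx2 hopen
    have := hend a (left_mem_segment ℝ a b) x1 hx1 x2 hx2 hopen
    exact (open_seg_endpoint hab this.1 this.2 hopen).1
  have hbE : b ∈ Set.extremePoints ℝ (Pset v) := by
    refine ⟨hbP, ?_⟩
    intro x1 hx1 x2 hx2 hopen
    have hmem := hend b (right_mem_segment ℝ a b) x1 hx1 x2 hx2 hopen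
    have hseg : x1 ∈ segment ℝ b a ∧ x2 ∈ segment ℝ b a := by
      rw [segment_symm]
      exact hmem
    exact (open_seg_endpoint (Ne.symm hab) hseg.1 hseg.2 hopen).1
  have haX : a ∈ Xset v := extremePoints_convexHull_subset haE
  have hbX : b ∈ Xset v := extremePoints_convexHull_subset hbE
  exact ⟨(a, b), Set.mk_mem_prod haX hbX, rfl⟩

lemma target_finite {d : ℕ} (v : Fin d → ℝ) (S : Set (Fin d → ℝ)) :
    {e : Set (Fin d → ℝ) | ∃ a b : Fin d → ℝ,
        e = segment ℝ a b ∧ IsFaceOf (Pset v) e ∧ adim e = 1 ∧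
        ((a ∈ S ∧ b ∉ S) ∨ (a ∉ S ∧ b ∈ S))}.Finite := by
  apply Set.Finite.subset _ (target_subset v S)
  exact (((Xset_finite v).prod (Xset_finite v)).image _)

/-- the graph of `P(v)` has edge expansion at least one: for every
`S ⊆ X(v)` with `0 < |S|` and `2|S| ≤ |X(v)|`, at least `|S|` edges of `P(v)`
have exactly one endpoint in `S`. -/
theorem stmt14 (d : ℕ) (hd : 0 < d) (v : Fin d → ℝ) (hv : v ∈ ZeroOne d) (hv0 : v ≠ 0)
    (S : Set (Fin d → ℝ)) (hS : S ⊆ Xset v) (hS0 : 0 < S.ncard)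
    (hS2 : 2 * S.ncard ≤ (Xset v).ncard) :
    S.ncard ≤ Set.ncard {e : Set (Fin d → ℝ) | ∃ a b : Fin d → ℝ,
      e = segment ℝ a b ∧ IsFaceOf (Pset v) e ∧ adim e = 1 ∧
      ((a ∈ S ∧ b ∉ S) ∨ (a ∉ S ∧ b ∈ S))} := by
  classical
  set N := valN d v with hN
  have hvd : N < 2 ^ d := valN_lt d v
  have hXcard : (Xset v).ncard = N := ncard_Xset hv
  have hSfin : S.Finite := (Xset_finite v).subset hS
  set Sf : Finset (Fin d → ℝ) := hSfin.toFinset with hSf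
  have hSfS : ∀ x, x ∈ Sf ↔ x ∈ S := fun x => Set.Finite.mem_toFinset hSfin
  have hScard : S.ncard = Sf.card := Set.ncard_eq_toFinset_card S hSfin
  set T : Finset ℕ := Sf.image (valN d) with hT
  have hS01 : ∀ x ∈ S, x ∈ ZeroOne d := fun x hx => (hS hx).1
  have hTcard : T.card = Sf.card := by
    apply Finset.card_image_of_injOn
    intro x hx y hy hxy
    rw [Finset.mem_coe, hSfS] at hx
    rw [Finset.mem_coe, hSfS] at hy
    rw [← vecN_valN (hS01 x hx), ← vecN_valN (hS01 y hy), hxy]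
  have hmemT : ∀ n, n ∈ T ↔ (n < N ∧ vecN d n ∈ S) := by
    intro n
    rw [hT, Finset.mem_image]
    constructor
    · rintro ⟨x, hx, rfl⟩
      rw [hSfS] at hx
      have hxX := hS hx
      rw [mem_Xset_iff hv] at hxX
      exact ⟨hxX.2, by rw [vecN_valN (hS01 x hx)]; exact hx⟩
    · rintro ⟨hn, hmem⟩
      refine ⟨vecN d n, (hSfS _).mpr hmem, ?_⟩
      exact valN_vecN (by omega)
  have hTsub : T ⊆ Finset.range N := by
    intro n hn
    rw [Finset.mem_range]
    exact ((hmemT n).mp hn).1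
  have hT2 : 2 * T.card ≤ N := by
    rw [hTcard, ← hScard]
    omega
  have hbd : T.card ≤ (bdry N T).card := coreFinal N T hTsub hT2
  set F : Finset (Set (Fin d → ℝ)) :=
    (bdry N T).image (fun p => segment ℝ (vecN d p.1) (vecN d (p.1 + 2 ^ p.2))) with hF
  have hFcard : F.card = (bdry N T).card := by
    apply Finset.card_image_of_injOn
    intro p hp q hq hpq
    simp only [Finset.mem_coe, mem_bdry] at hp hq
    obtain ⟨hp1, hp2, hp3, hp4, -⟩ := hp
    obtain ⟨hq1, hq2, hq3, hq4, -⟩ := hq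
    dsimp only at hpq
    have hpa : p.1 < 2 ^ d := by omega
    have hpb : p.1 + 2 ^ p.2 < 2 ^ d := by omega
    have hqa : q.1 < 2 ^ d := by omega
    have hqb : q.1 + 2 ^ q.2 < 2 ^ d := by omega
    have hinj : ∀ {m k : ℕ}, m < 2 ^ d → k < 2 ^ d → vecN d m = vecN d k → m = k := by
      intro m k hm hk h
      rw [← valN_vecN hm, ← valN_vecN hk, h]
    have hone : ∀ {m k : ℕ}, m < 2 ^ d → k < 2 ^ d → m ≠ k → vecN d m ≠ vecN d k := by
      intro m k hm hk hne h
      exact hne (hinj hm hk h)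
    have hppow : (0:ℕ) < 2 ^ p.2 := Nat.two_pow_pos _
    have hqpow : (0:ℕ) < 2 ^ q.2 := Nat.two_pow_pos _
    have hpne : vecN d p.1 ≠ vecN d (p.1 + 2 ^ p.2) := hone hpa hpb (by omega)
    have hqne : vecN d q.1 ≠ vecN d (q.1 + 2 ^ q.2) := hone hqa hqb (by omega)
    have h01 : ∀ n : ℕ, vecN d n ∈ ZeroOne d := fun n => vecN_mem_zeroOne d n
    have hc1 : vecN d p.1 = vecN d q.1 ∨ vecN d p.1 = vecN d (q.1 + 2 ^ q.2) := by
      apply zeroOne_seg (h01 _) (h01 _) (h01 _) hqne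
      rw [← hpq]
      exact left_mem_segment ℝ _ _
    have hc2 : vecN d (p.1 + 2 ^ p.2) = vecN d q.1 ∨
        vecN d (p.1 + 2 ^ p.2) = vecN d (q.1 + 2 ^ q.2) := by
      apply zeroOne_seg (h01 _) (h01 _) (h01 _) hqne
      rw [← hpq]
      exact right_mem_segment ℝ _ _
    have hfin : p.1 = q.1 ∧ p.1 + 2 ^ p.2 = q.1 + 2 ^ q.2 := by
      rcases hc1 with h1 | h1 <;> rcases hc2 with h2 | h2
      · exact absurd (h1.trans h2.symm) hpne
      · exact ⟨hinj hpa hqa h1, hinj hpb hqb h2⟩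
      · exfalso
        have e1 := hinj hpa hqb h1
        have e2 := hinj hpb hqa h2
        omega
      · exfalso
        have e1 := hinj hpa hqb h1
        have e2 := hinj hpb hqb h2
        omega
    have hpow : (2:ℕ) ^ p.2 = 2 ^ q.2 := by omega
    have hexp : p.2 = q.2 := Nat.pow_right_injective (le_refl 2) hpow
    exact Prod.ext hfin.1 hexp
  have hFsub : ↑F ⊆ {e : Set (Fin d → ℝ) | ∃ a b : Fin d → ℝ,
      e = segment ℝ a b ∧ IsFaceOf (Pset v) e ∧ adim e = 1 ∧
      ((a ∈ S ∧ b ∉ S) ∨ (a ∉ S ∧ b ∈ S))} := by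
    intro e he
    rw [hF, Finset.coe_image] at he
    obtain ⟨p, hp, rfl⟩ := he
    simp only [Finset.mem_coe, mem_bdry] at hp
    obtain ⟨hp1, hp2, hp3, hp4, hp5⟩ := hp
    obtain ⟨hmX, hkX, hne, hface, hdim⟩ := cube_edge_face hv (hN ▸ hp3) hp4
    refine ⟨vecN d p.1, vecN d (p.1 + 2 ^ p.2), rfl, hface, hdim, ?_⟩
    have hm' : vecN d p.1 ∈ S ↔ p.1 ∈ T := by
      rw [hmemT]
      constructor
      · intro h; exact ⟨hp1, h⟩
      · intro h; exact h.2
    have hk' : vecN d (p.1 + 2 ^ p.2) ∈ S ↔ (p.1 + 2 ^ p.2) ∈ T := by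
      rw [hmemT]
      constructor
      · intro h; exact ⟨hp3, h⟩
      · intro h; exact h.2
    by_cases hmS : vecN d p.1 ∈ S
    · left
      refine ⟨hmS, ?_⟩
      rw [hk']
      exact hp5.mp (hm'.mp hmS)
    · right
      refine ⟨hmS, ?_⟩
      rw [hk']
      by_contra hcon
      exact hmS (hm'.mpr (by tauto))
  calc S.ncard = T.card := by rw [hScard, hTcard]
    _ ≤ (bdry N T).card := hbd
    _ = F.card := hFcard.symm
    _ = (↑F : Set (Set (Fin d → ℝ))).ncard := (Set.ncard_coe_finset F).symm
    _ ≤ _ := Set.ncard_le_ncard hFsub (target_finite v S)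

end Asm
end
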